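/- arXiv:2511.11553 — 3 statements merged into one kernel-verified Lean document; each statement's English description precedes it below -/
import Mathlib

section
/- Let V be symmetric with unit eigenvector v_k (eigenvalue λ_k), and let F = (1/n)𝟙𝟙ᵀ ⊗ (I − v_kv_kᵀ)V − I_n ⊗ (v_kᵀVv_k·I + v_kv_kᵀV). Then each vector p^ℓ having v_k in its ℓ-th block and zeros elsewhere satisfies F p^ℓ = −2λ_k p^ℓ. -/
open Matrix Kronecker

/-- First class of eigenvectors of the Jacobian of the multiagent Oja flow at a consensus
`v_k`: each block vector `p^ℓ` with `v_k` in block `ℓ` satisfies `F p^ℓ = −2λ_k p^ℓ`. -/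
theorem jacobian_first_class_eigenvectors {d n : ℕ} (V : Matrix (Fin d) (Fin d) ℝ)
    (hV : V.IsSymm) (vk : Fin d → ℝ) (hvk : vk ⬝ᵥ vk = 1) (lamk : ℝ)
    (heig : V.mulVec vk = lamk • vk) (l : Fin n) :
    let F : Matrix (Fin n × Fin d) (Fin n × Fin d) ℝ :=
      (((1 : ℝ) / n) • (Matrix.of fun _ _ => (1 : ℝ) : Matrix (Fin n) (Fin n) ℝ)) ⊗ₖ
          (((1 : Matrix (Fin d) (Fin d) ℝ) - vecMulVec vk vk) * V) -
        (1 : Matrix (Fin n) (Fin n) ℝ) ⊗ₖ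
          (lamk • (1 : Matrix (Fin d) (Fin d) ℝ) + lamk • vecMulVec vk vk)
    let p : Fin n × Fin d → ℝ := fun q => if q.1 = l then vk q.2 else 0
    F.mulVec p = (-2 * lamk) • p := by
  intro F p
  have hvv : (vecMulVec vk vk).mulVec vk = vk := by
    funext j
    simp only [Matrix.mulVec, dotProduct, vecMulVec_apply, mul_assoc, ← Finset.mul_sum]
    rw [show ∑ s, vk s * vk s = 1 from hvk, mul_one]
  have h1 : (((1 : Matrix (Fin d) (Fin d) ℝ) - vecMulVec vk vk) * V).mulVec vk = 0 := by
    rw [← Matrix.mulVec_mulVec, heig, Matrix.mulVec_smul, Matrix.sub_mulVec,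
      Matrix.one_mulVec, hvv, sub_self, smul_zero]
  have h2 : (lamk • (1 : Matrix (Fin d) (Fin d) ℝ) + lamk • vecMulVec vk vk).mulVec vk
      = (2 * lamk) • vk := by
    rw [Matrix.add_mulVec, Matrix.smul_mulVec, Matrix.smul_mulVec,
      Matrix.one_mulVec, hvv, ← two_smul ℝ, smul_smul, mul_comm]
  have hA : ∀ j, ∑ s, ((((1 : Matrix (Fin d) (Fin d) ℝ) - vecMulVec vk vk) * V) j s) * vk s
      = 0 := fun j => congrFun h1 j
  have hC : ∀ j, ∑ s, ((lamk • (1 : Matrix (Fin d) (Fin d) ℝ) + lamk • vecMulVec vk vk) j s)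
      * vk s = 2 * lamk * vk j := fun j => congrFun h2 j
  funext x
  obtain ⟨i, j⟩ := x
  show ∑ q : Fin n × Fin d, F (i, j) q * p q = _
  rw [Fintype.sum_prod_type]
  have hp : ∀ m s, F (i, j) (m, s) * p (m, s)
      = if m = l then F (i, j) (m, s) * vk s else 0 := by
    intro m s
    simp only [p]
    split <;> simp
  simp only [hp]
  rw [Finset.sum_comm]
  simp only [Finset.sum_ite_eq' Finset.univ l (fun m => F (i, j) (m, _) * vk _)]
  simp only [Finset.mem_univ, if_true]
  have hF : ∀ s, F (i, j) (l, s)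
      = ((1 : ℝ) / n) * ((((1 : Matrix (Fin d) (Fin d) ℝ) - vecMulVec vk vk) * V) j s)
        - (if i = l then ((lamk • (1 : Matrix (Fin d) (Fin d) ℝ)
            + lamk • vecMulVec vk vk) j s) else 0) := by
    intro s
    simp only [F, Matrix.sub_apply, kroneckerMap_apply, Matrix.smul_apply, Matrix.of_apply,
      Matrix.one_apply, smul_eq_mul, mul_one]
    split <;> simp
  have hA' : ∀ j, ∑ s, (((1 : Matrix (Fin d) (Fin d) ℝ) * V - vecMulVec vk vk * V) j s)
      * vk s = 0 := by
    intro j; rw [← Matrix.sub_mul]; exact hA j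
  by_cases hi : i = l
  · subst hi
    simp only [hF, ↓reduceIte, sub_mul, Finset.sum_sub_distrib, mul_assoc,
      ← Finset.mul_sum, hA' j, hC j, mul_zero, zero_sub, p, Pi.smul_apply, smul_eq_mul]
    ring
  · simp only [hF, hi, if_false, sub_zero, Finset.sum_sub_distrib, mul_assoc,
      ← Finset.mul_sum, hA' j, mul_zero, p, Pi.smul_apply, smul_eq_mul]
    rw [hA j, mul_zero]
end

section
/- With F as the Jacobian of the multiagent Oja flow at consensus v_k, any vector r = (z₁ᵀ,…,zₙᵀ)ᵀ with v_kᵀzᵢ = 0 for all i and Σᵢ zᵢ = 0 satisfies F r = −λ_k r. -/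
open Matrix Kronecker

/-- Third class of eigenvectors of the Jacobian at consensus `v_k`: any stacked vector
`r = (z₁,…,zₙ)` with `v_kᵀzᵢ = 0` and `∑ᵢ zᵢ = 0` satisfies `F r = −λ_k r`. -/
theorem jacobian_third_class_eigenvectors {d n : ℕ} (V : Matrix (Fin d) (Fin d) ℝ)
    (hV : V.IsSymm) (vk : Fin d → ℝ) (hvk : vk ⬝ᵥ vk = 1) (lamk : ℝ)
    (heig : V.mulVec vk = lamk • vk) (z : Fin n → Fin d → ℝ)
    (horth : ∀ i, vk ⬝ᵥ z i = 0) (hsum : ∑ i, z i = 0) :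
    let F : Matrix (Fin n × Fin d) (Fin n × Fin d) ℝ :=
      (((1 : ℝ) / n) • (Matrix.of fun _ _ => (1 : ℝ) : Matrix (Fin n) (Fin n) ℝ)) ⊗ₖ
          (((1 : Matrix (Fin d) (Fin d) ℝ) - vecMulVec vk vk) * V) -
        (1 : Matrix (Fin n) (Fin n) ℝ) ⊗ₖ
          (lamk • (1 : Matrix (Fin d) (Fin d) ℝ) + lamk • vecMulVec vk vk)
    let r : Fin n × Fin d → ℝ := fun p => z p.1 p.2
    F.mulVec r = (-lamk) • r := by
  intro F r
  set B : Matrix (Fin d) (Fin d) ℝ := ((1 : Matrix (Fin d) (Fin d) ℝ) - vecMulVec vk vk) * V with hB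
  funext p
  obtain ⟨i, a⟩ := p
  have hsum' : ∀ b, ∑ j, z j b = 0 := fun b => by simpa using congrFun hsum b
  have hF : ∀ j b, F (i, a) (j, b)
      = (1/(n:ℝ)) * B a b - (if j = i then lamk * (if a = b then 1 else 0) + lamk * (vk a * vk b) else 0) := by
    intro j b
    simp only [F, Matrix.sub_apply, kroneckerMap_apply, Matrix.smul_apply, Matrix.add_apply,
      Matrix.one_apply, vecMulVec_apply, smul_eq_mul, Matrix.of_apply]
    by_cases h : i = j <;> simp [h, eq_comm, hB] <;> ring
  show ∑ q : Fin n × Fin d, F (i, a) q * z q.1 q.2 = -lamk * z i a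
  rw [Fintype.sum_prod_type]
  simp only [hF, sub_mul, Finset.sum_sub_distrib]
  have h1 : ∑ j, ∑ b, (1/(n:ℝ)) * B a b * z j b = 0 := by
    rw [Finset.sum_comm]
    apply Finset.sum_eq_zero
    intro b _
    rw [← Finset.mul_sum, hsum' b, mul_zero]
  rw [h1, zero_sub]
  have h2 : ∑ j, ∑ b, (if j = i then lamk * (if a = b then 1 else 0) + lamk * (vk a * vk b) else 0) * z j b
      = ∑ b, (lamk * (if a = b then 1 else 0) + lamk * (vk a * vk b)) * z i b := by
    simp [ite_mul, Finset.sum_ite_eq']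
  rw [h2]
  have h3 : ∑ b, (lamk * (if a = b then 1 else 0) + lamk * (vk a * vk b)) * z i b
      = lamk * z i a + lamk * vk a * (vk ⬝ᵥ z i) := by
    simp only [add_mul, Finset.sum_add_distrib, mul_ite, mul_one, mul_zero, ite_mul, zero_mul,
      Finset.sum_ite_eq, Finset.mem_univ, if_true, dotProduct, Finset.mul_sum]
    ring_nf
  rw [h3, horth, mul_zero, add_zero]
  ring
end

section
/- At a bipartite consensus configuration where xᵢ = v for i in a set of size n₁ and xᵢ = −v for the remaining n₂ = n − n₁ indices (0 < n₁ < n), the attention matrix A(x) has exactly rank 2, provided α₁ ≠ α₂ where α₁ = e^{vᵀQᵀKv} and α₂ = e^{−vᵀQᵀKv}, i.e., provided vᵀQᵀKv ≠ 0. -/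
open Matrix

/-- At a bipartite consensus configuration (`xᵢ = v` for `i < n₁`, `xᵢ = −v` otherwise,
with `0 < n₁ < n`) and `vᵀQᵀKv ≠ 0`, the attention matrix has rank exactly 2. -/
theorem attention_matrix_at_bipartite_consensus {d n : ℕ}
    (Q K : Matrix (Fin d) (Fin d) ℝ) (v : Fin d → ℝ) (hv : v ⬝ᵥ v = 1)
    (hQK : Q.mulVec v ⬝ᵥ K.mulVec v ≠ 0)
    (n₁ : ℕ) (h1 : 1 ≤ n₁) (h2 : n₁ ≤ n - 1) (hn : 0 < n)
    (x : Fin n → Fin d → ℝ)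
    (hx : ∀ i : Fin n, x i = if (i : ℕ) < n₁ then v else -v) :
    let A : Matrix (Fin n) (Fin n) ℝ := Matrix.of fun i j =>
      Real.exp (Q.mulVec (x i) ⬝ᵥ K.mulVec (x j)) /
        ∑ l, Real.exp (Q.mulVec (x i) ⬝ᵥ K.mulVec (x l))
    A.rank = 2 := by
  intro A
  have hn1 : n₁ < n := by omega
  set c := Q.mulVec v ⬝ᵥ K.mulVec v with hc
  set a := Real.exp c with ha
  set b := Real.exp (-c) with hb
  have hapos : 0 < a := Real.exp_pos _
  have hbpos : 0 < b := Real.exp_pos _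
  have hab : a ≠ b := by
    intro h
    exact hQK (by have := Real.exp_injective h; linarith)
  -- inner products
  have hip : ∀ i j : Fin n, Q.mulVec (x i) ⬝ᵥ K.mulVec (x j) =
      ((if (i : ℕ) < n₁ then 1 else -1) * (if (j : ℕ) < n₁ then 1 else -1)) * c := by
    intro i j
    rw [hx i, hx j]
    split_ifs <;>
      simp [Matrix.mulVec_neg, dotProduct_neg, neg_dotProduct, hc]
  have hnum : ∀ i j : Fin n, Real.exp (Q.mulVec (x i) ⬝ᵥ K.mulVec (x j)) =
      if ((i : ℕ) < n₁ ↔ (j : ℕ) < n₁) then a else b := by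
    intro i j
    rw [hip i j]
    by_cases hi : (i : ℕ) < n₁ <;> by_cases hj : (j : ℕ) < n₁ <;>
      simp [hi, hj, ha, hb]
  -- cardinality
  have hcard : (Finset.univ.filter fun l : Fin n => (l : ℕ) < n₁).card = n₁ := by
    have : (Finset.univ.filter fun l : Fin n => (l : ℕ) < n₁) = Finset.Iio (⟨n₁, hn1⟩ : Fin n) := by
      ext l
      simp [Finset.mem_Iio, Fin.lt_def]
    rw [this, Fin.card_Iio]
  have hcard' : (Finset.univ.filter fun l : Fin n => ¬ (l : ℕ) < n₁).card = n - n₁ := by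
    have := Finset.card_filter_add_card_filter_not (s := (Finset.univ : Finset (Fin n)))
      (p := fun l : Fin n => (l : ℕ) < n₁)
    simp only [Finset.card_univ, Fintype.card_fin] at this
    omega
  -- row sums
  have hsum : ∀ i : Fin n, (∑ l, Real.exp (Q.mulVec (x i) ⬝ᵥ K.mulVec (x l))) =
      if (i : ℕ) < n₁ then (n₁ : ℝ) * a + (n - n₁ : ℕ) * b
      else (n₁ : ℝ) * b + (n - n₁ : ℕ) * a := by
    intro i
    by_cases hi : (i : ℕ) < n₁
    · have hrw : ∀ l : Fin n, ((i : ℕ) < n₁ ↔ (l : ℕ) < n₁) = ((l : ℕ) < n₁) := fun l => by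
        simp [hi]
      simp only [hnum]
      simp only [hrw]
      rw [if_pos hi]
      rw [Finset.sum_ite, Finset.sum_const, Finset.sum_const, hcard, hcard']
      simp [nsmul_eq_mul]
    · have hrw : ∀ l : Fin n, (if ((i : ℕ) < n₁ ↔ (l : ℕ) < n₁) then a else b) =
          (if (l : ℕ) < n₁ then b else a) := fun l => by
        by_cases hl : (l : ℕ) < n₁ <;> simp [hi, hl]
      simp only [hnum]
      simp only [hrw]
      rw [if_neg hi]
      rw [Finset.sum_ite, Finset.sum_const, Finset.sum_const, hcard, hcard']
      simp [nsmul_eq_mul]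
  set s₁ : ℝ := (n₁ : ℝ) * a + (n - n₁ : ℕ) * b with hs₁
  set s₂ : ℝ := (n₁ : ℝ) * b + (n - n₁ : ℕ) * a with hs₂
  have hn₁pos : (0 : ℝ) < (n₁ : ℝ) := by exact_mod_cast h1
  have hn₂pos : (0 : ℝ) < ((n - n₁ : ℕ) : ℝ) := by
    have : 0 < n - n₁ := by omega
    exact_mod_cast this
  have hs₁pos : 0 < s₁ := by positivity
  have hs₂pos : 0 < s₂ := by positivity
  -- entries
  have hA : ∀ i j : Fin n, A i j =
      (if ((i : ℕ) < n₁ ↔ (j : ℕ) < n₁) then a else b) /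
        (if (i : ℕ) < n₁ then s₁ else s₂) := by
    intro i j
    show Real.exp _ / _ = _
    rw [hnum i j, hsum i]
  -- the two distinguished rows
  have h0n : (0 : ℕ) < n := hn
  set f : Fin 2 → Fin n := ![⟨0, h0n⟩, ⟨n₁, hn1⟩] with hf
  have hf0 : ((f 0 : Fin n) : ℕ) < n₁ := by simp [hf]; omega
  have hf1 : ¬ ((f 1 : Fin n) : ℕ) < n₁ := by simp [hf]
  -- rank ≤ 2 : A = C * D with inner dimension 2
  set C : Matrix (Fin n) (Fin 2) ℝ := Matrix.of fun i k =>
    if (i : ℕ) < n₁ then (if k = 0 then (1 : ℝ) else 0) else (if k = 1 then 1 else 0) with hC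
  set D : Matrix (Fin 2) (Fin n) ℝ := Matrix.of fun k j => A (f k) j with hD
  have hCD : A = C * D := by
    ext i j
    rw [Matrix.mul_apply, Fin.sum_univ_two]
    by_cases hi : (i : ℕ) < n₁
    · simp only [hC, hD, Matrix.of_apply, hi, if_true]
      rw [hA i j, hA (f 0) j]
      simp [hf0, hi]
    · simp only [hC, hD, Matrix.of_apply, hi, if_false]
      rw [hA i j, hA (f 1) j]
      simp [hf1, hi]
  have hle : A.rank ≤ 2 := by
    calc A.rank = (C * D).rank := by rw [hCD]
    _ ≤ D.rank := Matrix.rank_mul_le_right C D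
    _ ≤ Fintype.card (Fin 2) := Matrix.rank_le_card_height D
    _ = 2 := by simp
  -- rank ≥ 2 : the 2×2 submatrix on rows/cols f is invertible
  set M : Matrix (Fin 2) (Fin 2) ℝ := A.submatrix f f with hM
  have hM00 : M 0 0 = a / s₁ := by rw [hM]; simp only [Matrix.submatrix_apply]; rw [hA]; simp [hf0]
  have hM01 : M 0 1 = b / s₁ := by
    rw [hM]; simp only [Matrix.submatrix_apply]; rw [hA]; simp [hf0, hf1]
  have hM10 : M 1 0 = b / s₂ := by
    rw [hM]; simp only [Matrix.submatrix_apply]; rw [hA]; simp [hf0, hf1]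
  have hM11 : M 1 1 = a / s₂ := by
    rw [hM]; simp only [Matrix.submatrix_apply]; rw [hA]; simp [hf1]
  have hdet : M.det ≠ 0 := by
    rw [Matrix.det_fin_two, hM00, hM01, hM10, hM11]
    have : a / s₁ * (a / s₂) - b / s₁ * (b / s₂) = (a - b) * (a + b) / (s₁ * s₂) := by
      field_simp; ring
    rw [this]
    have h1' : a - b ≠ 0 := sub_ne_zero.mpr hab
    have h2' : a + b ≠ 0 := by positivity
    positivity
  have hMrank : M.rank = 2 := by
    have := Matrix.rank_of_isUnit M ((Matrix.isUnit_iff_isUnit_det M).mpr (isUnit_iff_ne_zero.mpr hdet))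
    simpa using this
  have hge : 2 ≤ A.rank := by
    have hfactor : M = ((1 : Matrix (Fin n) (Fin n) ℝ).submatrix f (Equiv.refl (Fin n))) * A *
        ((1 : Matrix (Fin n) (Fin n) ℝ).submatrix (Equiv.refl (Fin n)) f) := by
      rw [Matrix.one_submatrix_mul, Matrix.mul_submatrix_one]
      simp [hM]
    calc (2 : ℕ) = M.rank := hMrank.symm
    _ ≤ (((1 : Matrix (Fin n) (Fin n) ℝ).submatrix f (Equiv.refl (Fin n))) * A).rank := by
        rw [hfactor]; exact Matrix.rank_mul_le_left _ _
    _ ≤ A.rank := Matrix.rank_mul_le_right _ _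
  omega
end
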